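/- arXiv:2402.08291 — 4 statements merged into one kernel-verified Lean document; each statement's English description precedes it below -/
import Mathlib

section
/- With the notation above, the Fourier coefficients of a piecewise constant function $u_h$ on a uniform mesh of $n$ elements satisfy $\overline{u}_{k+2\mu n} = \frac{2k+1}{2k+1+4\mu n}\,\overline{u}_k$ for all $k \in \{0,\dots,2n-1\}$ and all $\mu \in \mathbb{N}$. -/
open Real Finset MeasureTheory

lemma piecewise_cos_integral (T : ℝ) (hT : 0 < T) (n : ℕ) (hn : 1 ≤ n)
    (u : ℕ → ℝ) (c : ℝ) (hc : c ≠ 0) :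
    (∫ t in (0 : ℝ)..T, (∑ i ∈ Finset.Icc 1 n,
      u i * Set.indicator (Set.Ioo (((i : ℝ) - 1) * (T / n)) ((i : ℝ) * (T / n))) 1 t)
        * Real.cos (c * t / T))
    = ∑ i ∈ Finset.Icc 1 n, u i * (T / c) *
        (Real.sin (c * i / n) - Real.sin (c * ((i : ℝ) - 1) / n)) := by
  have hn0 : (0 : ℝ) < n := by exact_mod_cast Nat.lt_of_lt_of_le Nat.zero_lt_one hn
  have hT0 : T ≠ 0 := hT.ne'
  -- rewrite each term as an indicator of a nice function
  have hpt : ∀ i : ℕ, ∀ t : ℝ,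
      u i * Set.indicator (Set.Ioo (((i : ℝ) - 1) * (T / n)) ((i : ℝ) * (T / n))) 1 t
        * Real.cos (c * t / T)
      = Set.indicator (Set.Ioo (((i : ℝ) - 1) * (T / n)) ((i : ℝ) * (T / n)))
          (fun t => u i * Real.cos (c * t / T)) t := by
    intro i t
    by_cases h : t ∈ Set.Ioo (((i : ℝ) - 1) * (T / n)) ((i : ℝ) * (T / n))
    · simp [Set.indicator_of_mem h]
    · simp [Set.indicator_of_notMem h]
  have hint : ∀ i ∈ Finset.Icc 1 n, IntervalIntegrable
      (fun t => u i * Set.indicator (Set.Ioo (((i : ℝ) - 1) * (T / n)) ((i : ℝ) * (T / n))) 1 t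
        * Real.cos (c * t / T)) volume 0 T := by
    intro i _
    have : (fun t => u i *
        Set.indicator (Set.Ioo (((i : ℝ) - 1) * (T / n)) ((i : ℝ) * (T / n))) 1 t
        * Real.cos (c * t / T))
        = Set.indicator (Set.Ioo (((i : ℝ) - 1) * (T / n)) ((i : ℝ) * (T / n)))
          (fun t => u i * Real.cos (c * t / T)) := funext (hpt i)
    rw [this, intervalIntegrable_iff_integrableOn_Ioc_of_le hT.le]
    exact (Continuous.integrableOn_Ioc (by fun_prop)).indicator measurableSet_Ioo
  rw [show (fun t => (∑ i ∈ Finset.Icc 1 n,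
        u i * Set.indicator (Set.Ioo (((i : ℝ) - 1) * (T / n)) ((i : ℝ) * (T / n))) 1 t)
        * Real.cos (c * t / T))
      = fun t => ∑ i ∈ Finset.Icc 1 n,
        u i * Set.indicator (Set.Ioo (((i : ℝ) - 1) * (T / n)) ((i : ℝ) * (T / n))) 1 t
        * Real.cos (c * t / T) from funext fun t => Finset.sum_mul _ _ _,
    intervalIntegral.integral_finset_sum hint]
  refine Finset.sum_congr rfl fun i hi => ?_
  obtain ⟨hi1, hin⟩ := Finset.mem_Icc.mp hi
  have hi1' : (1 : ℝ) ≤ i := by exact_mod_cast hi1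
  have hin' : (i : ℝ) ≤ n := by exact_mod_cast hin
  set a : ℝ := ((i : ℝ) - 1) * (T / n) with ha
  set b : ℝ := (i : ℝ) * (T / n) with hb
  have hh0 : 0 < T / n := div_pos hT hn0
  have hab : a ≤ b := by
    apply mul_le_mul_of_nonneg_right _ hh0.le
    linarith
  have ha0 : 0 ≤ a := mul_nonneg (by linarith) hh0.le
  have hbT : b ≤ T := by
    have : (i : ℝ) * (T / n) ≤ (n : ℝ) * (T / n) := mul_le_mul_of_nonneg_right hin' hh0.le
    rwa [mul_div_cancel₀ T hn0.ne'] at this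
  have hsub : Set.Ioo a b ⊆ Set.Ioc 0 T := fun x hx =>
    ⟨lt_of_le_of_lt ha0 hx.1, le_trans hx.2.le hbT⟩
  calc ∫ t in (0 : ℝ)..T,
        u i * Set.indicator (Set.Ioo a b) 1 t * Real.cos (c * t / T)
      = ∫ t in (0 : ℝ)..T,
        Set.indicator (Set.Ioo a b) (fun t => u i * Real.cos (c * t / T)) t := by
        refine intervalIntegral.integral_congr fun t _ => hpt i t
    _ = ∫ t in Set.Ioc (0 : ℝ) T,
        Set.indicator (Set.Ioo a b) (fun t => u i * Real.cos (c * t / T)) t := by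
        rw [intervalIntegral.integral_of_le hT.le]
    _ = ∫ t in Set.Ioo a b, u i * Real.cos (c * t / T) := by
        rw [MeasureTheory.integral_indicator measurableSet_Ioo,
          MeasureTheory.Measure.restrict_restrict measurableSet_Ioo,
          Set.inter_eq_self_of_subset_left hsub]
    _ = ∫ t in a..b, u i * Real.cos (c * t / T) := by
        rw [intervalIntegral.integral_of_le hab, MeasureTheory.integral_Ioc_eq_integral_Ioo]
    _ = u i * ∫ t in a..b, Real.cos (c * t / T) := by
        rw [← intervalIntegral.integral_const_mul]
    _ = u i * (T / c) * (Real.sin (c * i / n) - Real.sin (c * ((i : ℝ) - 1) / n)) := by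
        have hcT : c / T ≠ 0 := div_ne_zero hc hT0
        have : (fun t : ℝ => Real.cos (c * t / T)) = fun t => Real.cos ((c / T) * t) := by
          funext t; ring_nf
        rw [this, intervalIntegral.integral_comp_mul_left Real.cos hcT, integral_cos]
        rw [show c / T * b = c * i / n by rw [hb]; field_simp,
          show c / T * a = c * ((i : ℝ) - 1) / n by rw [ha]; field_simp]
        simp only [smul_eq_mul, inv_div]
        ring

theorem fourier_coeff_shift (T : ℝ) (hT : 0 < T) (n : ℕ) (hn : 1 ≤ n)
    (u : ℕ → ℝ)
    (uh : ℝ → ℝ)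
    (huh : uh = fun t => ∑ i ∈ Finset.Icc 1 n,
      u i * Set.indicator (Set.Ioo (((i : ℝ) - 1) * (T / n)) ((i : ℝ) * (T / n))) 1 t)
    (ubar : ℕ → ℝ)
    (hubar : ∀ k, ubar k = (2 / T) * ∫ t in (0 : ℝ)..T, uh t * Real.cos ((π / 2 + k * π) * t / T))
    (k : ℕ) (hk : k ≤ 2 * n - 1) (μ : ℕ) (hμ : 1 ≤ μ) :
    ubar (k + 2 * μ * n) = (2 * (k : ℝ) + 1) / (2 * k + 1 + 4 * μ * n) * ubar k := by
  have hn0 : (0 : ℝ) < n := by exact_mod_cast Nat.lt_of_lt_of_le Nat.zero_lt_one hn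
  have hπ := Real.pi_pos
  set c : ℝ := π / 2 + k * π with hcdef
  set c' : ℝ := π / 2 + (k + 2 * μ * n : ℕ) * π with hc'def
  have hc : 0 < c := by positivity
  have hc' : 0 < c' := by positivity
  have hcc' : c' = c + (μ * n : ℕ) * (2 * π) := by
    rw [hc'def, hcdef]; push_cast; ring
  have hsin : ∀ x : ℝ, ∀ m : ℕ, Real.sin (c' * (x * m) / n) = Real.sin (c * (x * m) / n) → True :=
    fun _ _ _ => trivial
  have key : ∀ i ∈ Finset.Icc 1 n,
      (Real.sin (c' * i / n) - Real.sin (c' * ((i : ℝ) - 1) / n))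
      = (Real.sin (c * i / n) - Real.sin (c * ((i : ℝ) - 1) / n)) := by
    intro i hi
    obtain ⟨hi1, _⟩ := Finset.mem_Icc.mp hi
    have h1 : c' * i / n = c * i / n + (μ * i : ℕ) * (2 * π) := by
      rw [hcc']; push_cast; field_simp
    have h2 : c' * ((i : ℝ) - 1) / n = c * ((i : ℝ) - 1) / n + (μ * (i - 1) : ℕ) * (2 * π) := by
      rw [hcc']
      have : ((μ * (i - 1) : ℕ) : ℝ) = μ * ((i : ℝ) - 1) := by
        push_cast [Nat.cast_sub hi1]; ring
      rw [this]; field_simp; push_cast; ring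
    rw [h1, h2, Real.sin_add_nat_mul_two_pi, Real.sin_add_nat_mul_two_pi]
  rw [hubar, hubar, huh]
  rw [piecewise_cos_integral T hT n hn u c hc.ne',
    piecewise_cos_integral T hT n hn u c' hc'.ne']
  rw [Finset.mul_sum, Finset.mul_sum, Finset.mul_sum]
  refine Finset.sum_congr rfl fun i hi => ?_
  rw [key i hi]
  have hden : (2 * (k : ℝ) + 1 + 4 * μ * n) ≠ 0 := by positivity
  have hratio : 2 / T * (u i * (T / c')) =
      (2 * (k : ℝ) + 1) / (2 * k + 1 + 4 * μ * n) * (2 / T * (u i * (T / c))) := by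
    have hc'e : c' = π * (2 * k + 1 + 4 * μ * n) / 2 := by
      rw [hc'def]; push_cast; ring
    have hce : c = π * (2 * k + 1) / 2 := by rw [hcdef]; ring
    rw [hc'e, hce]
    field_simp
  calc 2 / T * (u i * (T / c') * (Real.sin (c * i / n) - Real.sin (c * ((i : ℝ) - 1) / n)))
      = 2 / T * (u i * (T / c')) * (Real.sin (c * i / n) - Real.sin (c * ((i : ℝ) - 1) / n)) := by
        ring
    _ = (2 * (k : ℝ) + 1) / (2 * k + 1 + 4 * μ * n) *
        (2 / T * (u i * (T / c) * (Real.sin (c * i / n) - Real.sin (c * ((i : ℝ) - 1) / n)))) := by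
        rw [hratio]; ring
end

section
/- With the notation above, the Fourier coefficients of a piecewise constant function $u_h$ on a uniform mesh of $n$ elements satisfy $\overline{u}_{2n-1-k} = -\frac{2k+1}{4n-1-2k}\,\overline{u}_k$ for all $k \in \{0,\dots,n-1\}$. -/
open Real Finset MeasureTheory

lemma indicator_integral' (f : ℝ → ℝ) {s e T : ℝ} (h0 : 0 ≤ s) (hse : s ≤ e) (heT : e ≤ T) :
    ∫ t in (0:ℝ)..T, Set.indicator (Set.Ioo s e) (1 : ℝ → ℝ) t * f t = ∫ t in s..e, f t := by
  have h1 : ∀ t, Set.indicator (Set.Ioo s e) (1 : ℝ → ℝ) t * f t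
      = Set.indicator (Set.Ioo s e) f t := by
    intro t; by_cases h : t ∈ Set.Ioo s e <;> simp [h]
  simp_rw [h1]
  rw [intervalIntegral.integral_of_le (h0.trans (hse.trans heT)),
    MeasureTheory.setIntegral_indicator measurableSet_Ioo]
  have hsub : Set.Ioc 0 T ∩ Set.Ioo s e = Set.Ioo s e := by
    apply Set.inter_eq_self_of_subset_right
    intro x hx
    exact ⟨h0.trans_lt hx.1, hx.2.le.trans heT⟩
  rw [hsub, intervalIntegral.integral_of_le hse, MeasureTheory.integral_Ioc_eq_integral_Ioo]

lemma cos_integral' (c s e : ℝ) (hc : c ≠ 0) :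
    ∫ t in s..e, Real.cos (c * t) = (Real.sin (c*e) - Real.sin (c*s))/c := by
  rw [intervalIntegral.integral_comp_mul_left (fun x => Real.cos x) hc, integral_cos]
  field_simp
  rw [smul_eq_mul, ← mul_assoc, mul_one_div_cancel hc, one_mul]

lemma ubar_eval (T : ℝ) (hT : 0 < T) (n : ℕ) (hn : 1 ≤ n) (u : ℕ → ℝ) (a : ℝ) (ha : a ≠ 0) :
    ∫ t in (0:ℝ)..T, (∑ i ∈ Finset.Icc 1 n,
        u i * Set.indicator (Set.Ioo (((i:ℝ)-1)*(T/n)) ((i:ℝ)*(T/n))) 1 t) * Real.cos (a * t / T)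
    = ∑ i ∈ Finset.Icc 1 n, u i * ((Real.sin (a*i/n) - Real.sin (a*((i:ℝ)-1)/n)) * (T/a)) := by
  have hn' : (0:ℝ) < n := by exact_mod_cast hn
  simp_rw [Finset.sum_mul, mul_assoc]
  rw [intervalIntegral.integral_finset_sum]
  · apply Finset.sum_congr rfl
    intro i hi
    simp only [Finset.mem_Icc] at hi
    rw [intervalIntegral.integral_const_mul]
    congr 1
    have harg : ∀ t : ℝ, a * t / T = (a/T) * t := fun t => by ring
    simp_rw [harg]
    have h0 : (0:ℝ) ≤ ((i:ℝ)-1)*(T/n) := by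
      apply mul_nonneg
      · have : (1:ℝ) ≤ i := by exact_mod_cast hi.1
        linarith
      · positivity
    have hse : ((i:ℝ)-1)*(T/n) ≤ (i:ℝ)*(T/n) := by
      apply mul_le_mul_of_nonneg_right (by linarith) (by positivity)
    have heT : (i:ℝ)*(T/n) ≤ T := by
      rw [mul_div_assoc', div_le_iff₀ hn']
      have : (i:ℝ) ≤ n := by exact_mod_cast hi.2
      nlinarith
    rw [indicator_integral' _ h0 hse heT, cos_integral' _ _ _ (by positivity : a/T ≠ 0)]
    have e1 : a/T*((i:ℝ)*(T/n)) = a*i/n := by field_simp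
    have e2 : a/T*(((i:ℝ)-1)*(T/n)) = a*((i:ℝ)-1)/n := by field_simp
    rw [e1, e2]
    rw [div_div_eq_mul_div, mul_div_assoc]
  · intro i hi
    apply IntervalIntegrable.const_mul
    have h1 : (fun t => Set.indicator (Set.Ioo (((i:ℝ)-1)*(T/n)) ((i:ℝ)*(T/n))) (1:ℝ→ℝ) t * Real.cos (a * t / T))
        = Set.indicator (Set.Ioo (((i:ℝ)-1)*(T/n)) ((i:ℝ)*(T/n))) (fun t => Real.cos (a * t / T)) := by
      funext t; by_cases h : t ∈ Set.Ioo (((i:ℝ)-1)*(T/n)) ((i:ℝ)*(T/n)) <;> simp [h]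
    rw [h1, intervalIntegrable_iff]
    apply MeasureTheory.Integrable.indicator _ measurableSet_Ioo
    exact intervalIntegrable_iff.mp (Continuous.intervalIntegrable (by fun_prop) 0 T)

lemma sin_reflect (n k : ℕ) (hn : 1 ≤ n) (m : ℤ) :
    Real.sin ((π/2 + (2*(n:ℝ)-1-(k:ℝ))*π) * (m:ℝ) / n)
      = - Real.sin ((π/2 + (k:ℝ)*π) * (m:ℝ) / n) := by
  have hn' : (n:ℝ) ≠ 0 := by positivity
  have h : (π/2 + (2*(n:ℝ)-1-(k:ℝ))*π) * (m:ℝ) / n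
      = (m:ℤ) * (2*π) - (π/2 + (k:ℝ)*π) * (m:ℝ) / n := by
    field_simp
    ring
  rw [h, Real.sin_int_mul_two_pi_sub]

theorem fourier_coeff_reflection (T : ℝ) (hT : 0 < T) (n : ℕ) (hn : 1 ≤ n)
    (u : ℕ → ℝ)
    (uh : ℝ → ℝ)
    (huh : uh = fun t => ∑ i ∈ Finset.Icc 1 n,
      u i * Set.indicator (Set.Ioo (((i : ℝ) - 1) * (T / n)) ((i : ℝ) * (T / n))) 1 t)
    (ubar : ℕ → ℝ)
    (hubar : ∀ k, ubar k = (2 / T) * ∫ t in (0 : ℝ)..T, uh t * Real.cos ((π / 2 + k * π) * t / T))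
    (k : ℕ) (hk : k ≤ n - 1) :
    ubar (2 * n - 1 - k) = -((2 * (k : ℝ) + 1) / (4 * n - 1 - 2 * k)) * ubar k := by
  have hπ := Real.pi_pos
  have hkn : k + 1 ≤ n := by omega
  have hknR : (k:ℝ) + 1 ≤ n := by exact_mod_cast hkn
  have hcast : ((2*n-1-k : ℕ):ℝ) = 2*(n:ℝ)-1-(k:ℝ) := by
    rw [Nat.cast_sub (by omega), Nat.cast_sub (by omega)]
    push_cast
    ring
  have ha : (0:ℝ) < π/2 + (k:ℝ)*π := by positivity
  have hb : (0:ℝ) < π/2 + (2*(n:ℝ)-1-(k:ℝ))*π := by nlinarith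
  have hd : (4*(n:ℝ)-1-2*(k:ℝ)) ≠ 0 := by nlinarith
  rw [hubar, hubar, huh, hcast]
  rw [ubar_eval T hT n hn u _ hb.ne', ubar_eval T hT n hn u _ ha.ne']
  have key : ∀ i ∈ Finset.Icc 1 n,
      u i * ((Real.sin ((π/2 + (2*(n:ℝ)-1-(k:ℝ))*π)*i/n) - Real.sin ((π/2 + (2*(n:ℝ)-1-(k:ℝ))*π)*((i:ℝ)-1)/n)) * (T/(π/2 + (2*(n:ℝ)-1-(k:ℝ))*π)))
      = -((2 * (k : ℝ) + 1) / (4 * n - 1 - 2 * k)) *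
        (u i * ((Real.sin ((π/2 + (k:ℝ)*π)*i/n) - Real.sin ((π/2 + (k:ℝ)*π)*((i:ℝ)-1)/n)) * (T/(π/2 + (k:ℝ)*π)))) := by
    intro i hi
    have hi1 : ((i:ℝ)) = (((i:ℤ)):ℝ) := by push_cast; ring
    have hi2 : ((i:ℝ)-1) = ((((i:ℤ)-1):ℤ):ℝ) := by push_cast; ring
    rw [hi2, hi1, sin_reflect n k hn, sin_reflect n k hn]
    have hd0 : (0:ℝ) < 4 * (n:ℝ) - 1 - 2 * (k:ℝ) := by nlinarith
    have hco : T / (π/2 + (2*(n:ℝ)-1-(k:ℝ))*π)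
        = ((2*(k:ℝ)+1)/(4*(n:ℝ)-1-2*(k:ℝ))) * (T/(π/2+(k:ℝ)*π)) := by
      rw [div_mul_div_comm, div_eq_div_iff hb.ne' (mul_ne_zero hd0.ne' ha.ne')]
      ring
    rw [hco]
    ring
  rw [Finset.sum_congr rfl key, ← Finset.mul_sum]
  ring
end

section
/- Let $u_h$ be piecewise constant on a uniform mesh of $(0,T)$ into $n$ elements, with cosine Fourier coefficients $\overline{u}_k$. Then $\|u_h\|_{L^2(0,T)}^2 \leq \frac{T}{2}\,\frac{\pi^2}{3}\,\sum_{k=0}^{n-1}\overline{u}_k^2$. -/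
open Real Finset MeasureTheory


lemma ioo_int {T p q : ℝ} (hT0 : 0 ≤ T) (h0 : 0 ≤ p) (hpq : p ≤ q) (hq : q ≤ T)
    (g : ℝ → ℝ) (hg : Continuous g) :
    ∫ t in (0:ℝ)..T, (Set.Ioo p q).indicator g t = ∫ t in p..q, g t := by
  rw [intervalIntegral.integral_of_le hT0, intervalIntegral.integral_of_le hpq]
  rw [MeasureTheory.integral_indicator measurableSet_Ioo]
  rw [Measure.restrict_restrict measurableSet_Ioo]
  have hsub : Set.Ioo p q ∩ Set.Ioc 0 T = Set.Ioo p q := by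
    apply Set.inter_eq_left.mpr
    intro t ht
    exact ⟨lt_of_le_of_lt h0 ht.1, le_trans ht.2.le hq⟩
  rw [hsub, MeasureTheory.integral_Ioc_eq_integral_Ioo]

lemma intInd {T p q : ℝ} (g : ℝ → ℝ) (hg : Continuous g) :
    IntervalIntegrable ((Set.Ioo p q).indicator g) volume 0 T := by
  constructor <;>
  exact ((hg.intervalIntegrable _ _).1.indicator measurableSet_Ioo)

lemma cosint (c p q : ℝ) (hc : c ≠ 0) :
    ∫ t in p..q, Real.cos (c * t) = (Real.sin (c*q) - Real.sin (c*p)) / c := by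
  rw [intervalIntegral.integral_comp_mul_left _ hc, integral_cos]
  simp [smul_eq_mul]
  ring

lemma tele (θ : ℝ) (n : ℕ) :
    ∑ k ∈ range n, 2 * Real.sin θ * Real.cos ((2*k+1)*θ) = Real.sin (2*n*θ) := by
  induction n with
  | zero => simp
  | succ m ih =>
    rw [Finset.sum_range_succ, ih]
    have := Real.sin_sub_sin (2*((m:ℝ)+1)*θ) (2*(m:ℝ)*θ)
    push_cast
    ring_nf at this ⊢
    linarith

lemma sum_cos_zero (θ : ℝ) (n : ℕ) (h1 : Real.sin θ ≠ 0) (h2 : Real.sin (2*n*θ) = 0) :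
    ∑ k ∈ range n, Real.cos ((2*k+1)*θ) = 0 := by
  have h := tele θ n
  rw [← Finset.mul_sum, h2] at h
  have h3 : (2 * Real.sin θ) ≠ 0 := by simpa using h1
  exact (mul_eq_zero.mp h).resolve_left h3

lemma orth (n i j : ℕ) (hi1 : 1 ≤ i) (hin : i ≤ n) (hj1 : 1 ≤ j) (hjn : j ≤ n) :
    ∑ k ∈ range n,
      Real.cos ((2*k+1)*((2*(i:ℝ)-1)*π/(4*n))) * Real.cos ((2*k+1)*((2*(j:ℝ)-1)*π/(4*n)))
    = if i = j then (n:ℝ)/2 else 0 := by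
  have hn : 1 ≤ n := le_trans hi1 hin
  have hnR : (0:ℝ) < n := by positivity
  set α : ℝ := (2*(i:ℝ)-1)*π/(4*n) with hα
  set β : ℝ := (2*(j:ℝ)-1)*π/(4*n) with hβ
  have hterm : ∀ k : ℕ, Real.cos ((2*(k:ℝ)+1)*α) * Real.cos ((2*(k:ℝ)+1)*β)
      = (Real.cos ((2*(k:ℝ)+1)*(α-β)) + Real.cos ((2*(k:ℝ)+1)*(α+β))) / 2 := by
    intro k
    have := Real.two_mul_cos_mul_cos ((2*(k:ℝ)+1)*α) ((2*(k:ℝ)+1)*β)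
    have e1 : (2*(k:ℝ)+1)*α - (2*(k:ℝ)+1)*β = (2*(k:ℝ)+1)*(α-β) := by ring
    have e2 : (2*(k:ℝ)+1)*α + (2*(k:ℝ)+1)*β = (2*(k:ℝ)+1)*(α+β) := by ring
    rw [e1, e2] at this
    linarith
  rw [Finset.sum_congr rfl (fun k _ => hterm k)]
  rw [← Finset.sum_div, Finset.sum_add_distrib]
  -- sum over α+β vanishes
  have hplus : ∑ k ∈ range n, Real.cos ((2*(k:ℝ)+1)*(α+β)) = 0 := by
    apply sum_cos_zero
    · apply ne_of_gt
      apply Real.sin_pos_of_pos_of_lt_pi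
      · have : (0:ℝ) < 2*(i:ℝ)-1 := by
          have : (1:ℝ) ≤ (i:ℝ) := by exact_mod_cast hi1
          linarith
        have h2 : (0:ℝ) < 2*(j:ℝ)-1 := by
          have : (1:ℝ) ≤ (j:ℝ) := by exact_mod_cast hj1
          linarith
        rw [hα, hβ]
        have := Real.pi_pos
        positivity
    -- α+β < π
      · rw [hα, hβ]
        have hiR : (i:ℝ) ≤ n := by exact_mod_cast hin
        have hjR : (j:ℝ) ≤ n := by exact_mod_cast hjn
        have := Real.pi_pos
        rw [← add_div, ← add_mul]
        rw [div_lt_iff₀ (by positivity)]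
        nlinarith
    · have e : 2*(n:ℝ)*(α+β) = ((i+j-1 : ℕ) : ℝ) * π := by
        rw [hα, hβ]
        have : ((i+j-1 : ℕ) : ℝ) = (i:ℝ) + (j:ℝ) - 1 := by
          push_cast [Nat.cast_sub (by omega : 1 ≤ i + j)]
          ring
        rw [this]
        field_simp
        ring
      rw [e, Real.sin_nat_mul_pi]
  rw [hplus]
  by_cases hij : i = j
  · subst hij
    have : ∑ k ∈ range n, Real.cos ((2*(k:ℝ)+1)*(α-α)) = n := by
      simp
    rw [this]
    simp
  · have hminus : ∑ k ∈ range n, Real.cos ((2*(k:ℝ)+1)*(α-β)) = 0 := by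
      apply sum_cos_zero
      · -- sin(α-β) ≠ 0
        have e : α - β = ((i:ℝ) - j) * π / (2*n) := by
          rw [hα, hβ]; field_simp; ring
        have hpi := Real.pi_pos
        have hiR : (i:ℝ) ≤ n := by exact_mod_cast hin
        have hjR : (j:ℝ) ≤ n := by exact_mod_cast hjn
        have hi1R : (1:ℝ) ≤ (i:ℝ) := by exact_mod_cast hi1
        have hj1R : (1:ℝ) ≤ (j:ℝ) := by exact_mod_cast hj1
        have hne : (i:ℝ) ≠ j := fun h => hij (by exact_mod_cast h)
        rw [Ne, Real.sin_eq_zero_iff_of_lt_of_lt]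
        · rw [e]
          exact div_ne_zero (mul_ne_zero (sub_ne_zero.mpr hne) (ne_of_gt hpi)) (by positivity)
        · rw [e, neg_lt, ← neg_div, ← neg_mul, neg_sub]
          rw [div_lt_iff₀ (by positivity)]
          nlinarith
        · rw [e, div_lt_iff₀ (by positivity)]
          nlinarith
      · have e : 2*(n:ℝ)*(α-β) = ((i:ℤ) - j) * π := by
          rw [hα, hβ]; push_cast; field_simp; ring
        have := Real.sin_int_mul_pi ((i:ℤ) - j)
        push_cast at this
        rw [e]
        exact_mod_cast this
    rw [hminus]
    simp [hij]

lemma sq_sum (n : ℕ) (u : ℕ → ℝ) :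
    ∑ k ∈ range n, (∑ i ∈ Icc 1 n,
        u i * Real.cos ((2*(k:ℝ)+1)*((2*(i:ℝ)-1)*π/(4*(n:ℝ)))))^2
    = ((n:ℝ)/2) * ∑ i ∈ Icc 1 n, (u i)^2 := by
  have step1 : ∑ k ∈ range n, (∑ i ∈ Icc 1 n,
        u i * Real.cos ((2*(k:ℝ)+1)*((2*(i:ℝ)-1)*π/(4*(n:ℝ)))))^2
      = ∑ i ∈ Icc 1 n, ∑ j ∈ Icc 1 n, (u i * u j) *
          ∑ k ∈ range n, Real.cos ((2*(k:ℝ)+1)*((2*(i:ℝ)-1)*π/(4*(n:ℝ)))) *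
            Real.cos ((2*(k:ℝ)+1)*((2*(j:ℝ)-1)*π/(4*(n:ℝ)))) := by
    simp_rw [sq, Finset.sum_mul_sum, Finset.mul_sum]
    rw [Finset.sum_comm]
    refine Finset.sum_congr rfl fun i _ => ?_
    rw [Finset.sum_comm]
    refine Finset.sum_congr rfl fun j _ => ?_
    refine Finset.sum_congr rfl fun k _ => ?_
    ring
  rw [step1]
  have step2 : ∀ i ∈ Icc 1 n, ∑ j ∈ Icc 1 n, (u i * u j) *
          (∑ k ∈ range n, Real.cos ((2*(k:ℝ)+1)*((2*(i:ℝ)-1)*π/(4*(n:ℝ)))) *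
            Real.cos ((2*(k:ℝ)+1)*((2*(j:ℝ)-1)*π/(4*(n:ℝ)))))
        = ((n:ℝ)/2) * (u i)^2 := by
    intro i hi
    rw [Finset.mem_Icc] at hi
    have : ∀ j ∈ Icc 1 n, (u i * u j) *
          (∑ k ∈ range n, Real.cos ((2*(k:ℝ)+1)*((2*(i:ℝ)-1)*π/(4*(n:ℝ)))) *
            Real.cos ((2*(k:ℝ)+1)*((2*(j:ℝ)-1)*π/(4*(n:ℝ)))))
        = if j = i then ((n:ℝ)/2) * (u i)^2 else 0 := by
      intro j hj
      rw [Finset.mem_Icc] at hj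
      rw [orth n i j hi.1 hi.2 hj.1 hj.2]
      by_cases h : j = i
      · subst h; simp; ring
      · simp [h, Ne.symm h]
    rw [Finset.sum_congr rfl this, Finset.sum_ite_eq' (Icc 1 n) i]
    simp [Finset.mem_Icc, hi.1, hi.2]
  rw [Finset.sum_congr rfl step2, ← Finset.mul_sum]

lemma claim1 (T : ℝ) (hT : 0 < T) (n : ℕ) (hn : 1 ≤ n) (u : ℕ → ℝ) :
    ∫ t in (0:ℝ)..T, (∑ i ∈ Finset.Icc 1 n,
      u i * Set.indicator (Set.Ioo (((i : ℝ) - 1) * (T / n)) ((i : ℝ) * (T / n))) 1 t)^2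
    = (T/n) * ∑ i ∈ Icc 1 n, (u i)^2 := by

  have hnR : (0:ℝ) < n := by exact_mod_cast hn
  have hh : (0:ℝ) < T/n := by positivity
  set p : ℕ → ℝ := fun i => ((i:ℝ)-1)*(T/n) with hp
  set q : ℕ → ℝ := fun i => (i:ℝ)*(T/n) with hq
  have hdis : ∀ i j : ℕ, i ≠ j → ∀ t : ℝ, t ∈ Set.Ioo (p i) (q i) → t ∉ Set.Ioo (p j) (q j) := by
    intro i j hij t hti htj
    simp only [Set.mem_Ioo, hp, hq] at hti htj
    rcases lt_or_gt_of_ne hij with h | h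
    · have : (i:ℝ) ≤ (j:ℝ) - 1 := by
        have : (i:ℝ) + 1 ≤ j := by exact_mod_cast h
        linarith
      nlinarith [hti.2, htj.1]
    · have : (j:ℝ) ≤ (i:ℝ) - 1 := by
        have : (j:ℝ) + 1 ≤ i := by exact_mod_cast h
        linarith
      nlinarith [hti.1, htj.2]
  have hpt : ∀ t : ℝ, (∑ i ∈ Icc 1 n, u i * (Set.Ioo (p i) (q i)).indicator 1 t)^2
      = ∑ i ∈ Icc 1 n, (Set.Ioo (p i) (q i)).indicator (fun _ => (u i)^2) t := by
    intro t
    by_cases hex : ∃ i ∈ Icc 1 n, t ∈ Set.Ioo (p i) (q i)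
    · obtain ⟨i₀, hi₀, ht⟩ := hex
      have hL : (∑ i ∈ Icc 1 n, u i * (Set.Ioo (p i) (q i)).indicator 1 t) = u i₀ := by
        rw [Finset.sum_eq_single i₀]
        · simp [Set.indicator_of_mem ht]
        · intro j hj hne
          simp [Set.indicator_of_notMem (hdis i₀ j (Ne.symm hne) t ht)]
        · intro h; exact absurd hi₀ h
      have hR : (∑ i ∈ Icc 1 n, (Set.Ioo (p i) (q i)).indicator (fun _ => (u i)^2) t) = (u i₀)^2 := by
        rw [Finset.sum_eq_single i₀]
        · simp [Set.indicator_of_mem ht]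
        · intro j hj hne
          simp [Set.indicator_of_notMem (hdis i₀ j (Ne.symm hne) t ht)]
        · intro h; exact absurd hi₀ h
      rw [hL, hR]
    · push_neg at hex
      have hL : ∀ i ∈ Icc 1 n, u i * (Set.Ioo (p i) (q i)).indicator 1 t = 0 := by
        intro i hi; simp [Set.indicator_of_notMem (hex i hi)]
      have hR : ∀ i ∈ Icc 1 n, (Set.Ioo (p i) (q i)).indicator (fun _ => (u i)^2) t = 0 := by
        intro i hi; simp [Set.indicator_of_notMem (hex i hi)]
      rw [Finset.sum_congr rfl hL, Finset.sum_congr rfl hR]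
      simp
  rw [intervalIntegral.integral_congr (g := fun t => ∑ i ∈ Icc 1 n,
      (Set.Ioo (p i) (q i)).indicator (fun _ => (u i)^2) t) (fun t _ => hpt t)]
  rw [intervalIntegral.integral_finset_sum]
  · have : ∀ i ∈ Icc 1 n, ∫ t in (0:ℝ)..T, (Set.Ioo (p i) (q i)).indicator (fun _ => (u i)^2) t
        = (u i)^2 * (T/n) := by
      intro i hi
      rw [Finset.mem_Icc] at hi
      have hi1 : (1:ℝ) ≤ i := by exact_mod_cast hi.1
      have hin : (i:ℝ) ≤ n := by exact_mod_cast hi.2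
      rw [ioo_int hT.le (by simp only [hp]; nlinarith) (by simp only [hp,hq]; nlinarith)
        (by simp only [hq]; rw [← mul_div_assoc, div_le_iff₀ hnR] at *; nlinarith)
        _ continuous_const]
      rw [intervalIntegral.integral_const]
      simp only [hp, hq, smul_eq_mul]
      ring
    rw [Finset.sum_congr rfl this, ← Finset.sum_mul, mul_comm]
  · intro i _
    exact intInd _ continuous_const

lemma claim2 (T : ℝ) (hT : 0 < T) (n : ℕ) (hn : 1 ≤ n) (u : ℕ → ℝ) (k : ℕ) :
    (2 / T) * (∫ t in (0:ℝ)..T, (∑ i ∈ Finset.Icc 1 n,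
      u i * Set.indicator (Set.Ioo (((i : ℝ) - 1) * (T / n)) ((i : ℝ) * (T / n))) 1 t)
        * Real.cos ((π / 2 + k * π) * t / T))
    = (4 * Real.sin ((2*(k:ℝ)+1)*π/(4*(n:ℝ))) / (π/2 + k*π)) *
      ∑ i ∈ Icc 1 n, u i * Real.cos ((2*(k:ℝ)+1)*((2*(i:ℝ)-1)*π/(4*(n:ℝ)))) := by
  have hnR : (0:ℝ) < n := by exact_mod_cast hn
  have hpi := Real.pi_pos
  have ha : (0:ℝ) < π/2 + k*π := by positivity
  set a : ℝ := π/2 + k*π with haa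
  set c : ℝ := a / T with hc
  have hcne : c ≠ 0 := by positivity
  have hh : (0:ℝ) < T/n := by positivity
  have hpt : ∀ t : ℝ, (∑ i ∈ Finset.Icc 1 n,
      u i * Set.indicator (Set.Ioo (((i : ℝ) - 1) * (T / n)) ((i : ℝ) * (T / n))) 1 t)
        * Real.cos ((π / 2 + k * π) * t / T)
      = ∑ i ∈ Icc 1 n, (Set.Ioo (((i : ℝ) - 1) * (T / n)) ((i : ℝ) * (T / n))).indicator
          (fun s => u i * Real.cos (c * s)) t := by
    intro t
    rw [Finset.sum_mul]
    refine Finset.sum_congr rfl fun i _ => ?_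
    have harg : (π / 2 + k * π) * t / T = c * t := by
      rw [hc, haa]; ring
    by_cases h : t ∈ Set.Ioo (((i : ℝ) - 1) * (T / n)) ((i : ℝ) * (T / n))
    · simp [Set.indicator_of_mem h, harg]
    · simp [Set.indicator_of_notMem h]
  rw [intervalIntegral.integral_congr (fun t _ => hpt t)]
  rw [intervalIntegral.integral_finset_sum (fun i _ => intInd (fun s => u i * Real.cos (c * s)) (by fun_prop))]
  have hterm : ∀ i ∈ Icc 1 n, (∫ t in (0:ℝ)..T,
      (Set.Ioo (((i : ℝ) - 1) * (T / n)) ((i : ℝ) * (T / n))).indicator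
        (fun s => u i * Real.cos (c * s)) t)
      = (2*T/a) * Real.sin ((2*(k:ℝ)+1)*π/(4*(n:ℝ))) *
          (u i * Real.cos ((2*(k:ℝ)+1)*((2*(i:ℝ)-1)*π/(4*(n:ℝ))))) := by
    intro i hi
    rw [Finset.mem_Icc] at hi
    have hi1 : (1:ℝ) ≤ i := by exact_mod_cast hi.1
    have hin : (i:ℝ) ≤ n := by exact_mod_cast hi.2
    rw [ioo_int hT.le (by nlinarith [hh]) (by nlinarith [hh])
      (by rw [← mul_div_assoc, div_le_iff₀ hnR]; nlinarith) (fun s => u i * Real.cos (c * s)) (by fun_prop)]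
    rw [intervalIntegral.integral_const_mul, cosint _ _ _ hcne]
    have e1 : c * ((i:ℝ) * (T / n)) = a * i / n := by rw [hc]; field_simp
    have e2 : c * (((i:ℝ)-1) * (T / n)) = a * ((i:ℝ)-1) / n := by rw [hc]; field_simp
    rw [e1, e2, Real.sin_sub_sin]
    have e3 : (a * (i:ℝ) / n - a * ((i:ℝ)-1) / n) / 2 = (2*(k:ℝ)+1)*π/(4*(n:ℝ)) := by
      rw [haa]; field_simp; ring
    have e4 : (a * (i:ℝ) / n + a * ((i:ℝ)-1) / n) / 2 = (2*(k:ℝ)+1)*((2*(i:ℝ)-1)*π/(4*(n:ℝ))) := by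
      rw [haa]; field_simp; ring
    rw [e3, e4, hc]
    field_simp
  rw [Finset.sum_congr rfl hterm, ← Finset.mul_sum, ← mul_assoc]
  have : 2 / T * (2*T/a * Real.sin ((2*(k:ℝ)+1)*π/(4*(n:ℝ))))
      = 4 * Real.sin ((2*(k:ℝ)+1)*π/(4*(n:ℝ))) / a := by
    field_simp
    ring
  rw [this]

theorem norm_bound_n (T : ℝ) (hT : 0 < T) (n : ℕ) (hn : 1 ≤ n)
    (u : ℕ → ℝ)
    (uh : ℝ → ℝ)
    (huh : uh = fun t => ∑ i ∈ Finset.Icc 1 n,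
      u i * Set.indicator (Set.Ioo (((i : ℝ) - 1) * (T / n)) ((i : ℝ) * (T / n))) 1 t)
    (ubar : ℕ → ℝ)
    (hubar : ∀ k, ubar k = (2 / T) * ∫ t in (0 : ℝ)..T, uh t * Real.cos ((π / 2 + k * π) * t / T)) :
    (∫ t in (0 : ℝ)..T, (uh t) ^ 2) ≤ T / 2 * (π ^ 2 / 3) * ∑ k ∈ Finset.range n, (ubar k) ^ 2 := by
  have hnR : (0:ℝ) < n := by exact_mod_cast hn
  have hpi := Real.pi_pos
  have h1 : (∫ t in (0 : ℝ)..T, (uh t) ^ 2) = (T/n) * ∑ i ∈ Icc 1 n, (u i)^2 := by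
    simp only [huh]
    exact claim1 T hT n hn u
  have hub : ∀ k : ℕ, ubar k = (4 * Real.sin ((2*(k:ℝ)+1)*π/(4*(n:ℝ))) / (π/2 + k*π)) *
      ∑ i ∈ Icc 1 n, u i * Real.cos ((2*(k:ℝ)+1)*((2*(i:ℝ)-1)*π/(4*(n:ℝ)))) := by
    intro k
    rw [hubar k]
    simp only [huh]
    exact claim2 T hT n hn u k
  have h2 : ∑ i ∈ Icc 1 n, (u i)^2 = (2/(n:ℝ)) * ∑ k ∈ range n, (∑ i ∈ Icc 1 n,
      u i * Real.cos ((2*(k:ℝ)+1)*((2*(i:ℝ)-1)*π/(4*(n:ℝ)))))^2 := by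
    rw [sq_sum n u]
    field_simp
  have h4 : ∀ k ∈ range n, (∑ i ∈ Icc 1 n,
      u i * Real.cos ((2*(k:ℝ)+1)*((2*(i:ℝ)-1)*π/(4*(n:ℝ)))))^2
      ≤ π^2*(n:ℝ)^2/16 * (ubar k)^2 := by
    intro k hk
    rw [Finset.mem_range] at hk
    have hkR : (k:ℝ) ≤ (n:ℝ) - 1 := by
      have : (k:ℝ) + 1 ≤ n := by exact_mod_cast hk
      linarith
    set β : ℝ := (2*(k:ℝ)+1)*π/(4*(n:ℝ)) with hβ
    set S : ℝ := ∑ i ∈ Icc 1 n, u i * Real.cos ((2*(k:ℝ)+1)*((2*(i:ℝ)-1)*π/(4*(n:ℝ)))) with hSd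
    have hβ0 : 0 ≤ β := by rw [hβ]; positivity
    have hβle : β ≤ π/2 := by
      rw [hβ, div_le_div_iff₀ (by positivity) (by norm_num)]
      nlinarith
    have hsin := Real.mul_le_sin hβ0 hβle
    have ha : (0:ℝ) < π/2 + k*π := by positivity
    have key : π/2 + (k:ℝ)*π ≤ π*(n:ℝ)*Real.sin β := by
      have e : π*(n:ℝ)*((2/π)*β) = π/2 + (k:ℝ)*π := by
        rw [hβ]; field_simp; ring
      calc π/2 + (k:ℝ)*π = π*(n:ℝ)*((2/π)*β) := e.symm
        _ ≤ π*(n:ℝ)*Real.sin β := by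
            apply mul_le_mul_of_nonneg_left hsin (by positivity)
    have hq : 1 ≤ π*(n:ℝ)*Real.sin β/(π/2 + k*π) := (one_le_div ha).mpr key
    have hq2 : 1 ≤ (π*(n:ℝ)*Real.sin β/(π/2 + k*π))^2 := by nlinarith
    have e2 : π^2*(n:ℝ)^2/16 * (ubar k)^2 = (π*(n:ℝ)*Real.sin β/(π/2 + k*π))^2 * S^2 := by
      rw [hub k, ← hβ, ← hSd]
      field_simp
      ring
    rw [e2]
    nlinarith [sq_nonneg S]
  have hsum_le : ∑ k ∈ range n, (∑ i ∈ Icc 1 n,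
      u i * Real.cos ((2*(k:ℝ)+1)*((2*(i:ℝ)-1)*π/(4*(n:ℝ)))))^2
      ≤ π^2*(n:ℝ)^2/16 * ∑ k ∈ range n, (ubar k)^2 := by
    rw [Finset.mul_sum]
    exact Finset.sum_le_sum h4
  have hub2 : (0:ℝ) ≤ ∑ k ∈ range n, (ubar k)^2 :=
    Finset.sum_nonneg (fun k _ => sq_nonneg _)
  rw [h1, h2]
  calc (T/n) * ((2/(n:ℝ)) * ∑ k ∈ range n, (∑ i ∈ Icc 1 n,
        u i * Real.cos ((2*(k:ℝ)+1)*((2*(i:ℝ)-1)*π/(4*(n:ℝ)))))^2)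
      ≤ (T/n) * ((2/(n:ℝ)) * (π^2*(n:ℝ)^2/16 * ∑ k ∈ range n, (ubar k)^2)) := by
        apply mul_le_mul_of_nonneg_left _ (by positivity)
        apply mul_le_mul_of_nonneg_left hsum_le (by positivity)
    _ = T*π^2/8 * ∑ k ∈ range n, (ubar k)^2 := by
        field_simp
        ring
    _ ≤ T/2 * (π^2/3) * ∑ k ∈ range n, (ubar k)^2 := by
        apply mul_le_mul_of_nonneg_right _ hub2
        nlinarith
end

section
/- Let $u \in H^2(0,T)$, let $0 = t_0 < \cdots < t_n = T$ be a uniform mesh with $h = T/n$, and define $u^2(t) := -\frac{1}{2h}\int_{t_{i-1}}^{t_i}\widetilde{G}(s,t)\,u''(s)\,ds$ for $t \in (t_{i-1},t_i)$, where $\widetilde{G}(s,t) = (s-t_{i-1})^2 - h(2t-t_{i-1}-t_i)$ for $s < t$ and $\widetilde{G}(s,t) = (s-t_i)^2$ for $s > t$. Then $\|u^2\|_{L^2(0,T)} \leq \frac{1}{3}h^2\|u''\|_{L^2(0,T)}$. -/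
open Real MeasureTheory intervalIntegral Finset

lemma cs_measure {α : Type*} [MeasurableSpace α] (μ : Measure α) (f g : α → ℝ)
    (hfg : Integrable (fun x => f x * g x) μ)
    (hf : Integrable (fun x => f x ^ 2) μ) (hg : Integrable (fun x => g x ^ 2) μ) :
    (∫ x, f x * g x ∂μ) ^ 2 ≤ (∫ x, f x ^ 2 ∂μ) * (∫ x, g x ^ 2 ∂μ) := by
  set A := ∫ x, f x ^ 2 ∂μ with hA
  set B := ∫ x, g x ^ 2 ∂μ with hB
  set C := ∫ x, f x * g x ∂μ with hC
  have key : ∀ t : ℝ, 0 ≤ A * (t * t) + (2 * C) * t + B := by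
    intro t
    have h1 : (∫ x, (t * f x + g x) ^ 2 ∂μ) = A * (t * t) + (2 * C) * t + B := by
      have e : (fun x => (t * f x + g x) ^ 2)
          = fun x => (t * t) * (f x ^ 2) + ((2 * t) * (f x * g x) + g x ^ 2) := by
        funext x; ring
      have i1 : Integrable (fun x => (2 * t) * (f x * g x) + g x ^ 2) μ :=
        (hfg.const_mul _).add hg
      rw [e, integral_add (hf.const_mul _) i1,
        integral_add (hfg.const_mul _) hg, MeasureTheory.integral_const_mul, MeasureTheory.integral_const_mul]
      ring
    rw [← h1]
    exact integral_nonneg fun x => sq_nonneg _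
  have hd := discrim_le_zero key
  rw [discrim] at hd
  nlinarith [hd]

lemma cs_interval {a b : ℝ} (hab : a ≤ b) (f g : ℝ → ℝ)
    (hfg : IntervalIntegrable (fun x => f x * g x) volume a b)
    (hf : IntervalIntegrable (fun x => f x ^ 2) volume a b)
    (hg : IntervalIntegrable (fun x => g x ^ 2) volume a b) :
    (∫ x in a..b, f x * g x) ^ 2 ≤ (∫ x in a..b, f x ^ 2) * (∫ x in a..b, g x ^ 2) := by
  rw [integral_of_le hab, integral_of_le hab, integral_of_le hab]
  exact cs_measure _ f g
    ((intervalIntegrable_iff_integrableOn_Ioc_of_le hab).1 hfg)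
    ((intervalIntegrable_iff_integrableOn_Ioc_of_le hab).1 hf)
    ((intervalIntegrable_iff_integrableOn_Ioc_of_le hab).1 hg)


lemma elem_est (h : ℝ) (hh0 : 0 < h) (A B : ℝ) (hB : B = A + h)
    (u'' u2 : ℝ → ℝ)
    (hintk : IntervalIntegrable u'' volume A B)
    (hint2k : IntervalIntegrable (fun s => u'' s ^ 2) volume A B)
    (hIk : IntervalIntegrable (fun t => u2 t ^ 2) volume A B)
    (hu : ∀ t ∈ Set.Ioo A B, u2 t = -(1 / (2 * h)) *
      ∫ s in A..B, (if s < t then (s - A) ^ 2 - h * (2 * t - A - B) else (s - B) ^ 2) * u'' s) :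
    ∫ t in A..B, u2 t ^ 2 ≤ 1 / 9 * h ^ 4 * ∫ s in A..B, u'' s ^ 2 := by
  have hAB : A ≤ B := by rw [hB]; linarith
  set M := ∫ s in A..B, u'' s ^ 2 with hM
  have hM0 : 0 ≤ M := intervalIntegral.integral_nonneg hAB fun x _ => sq_nonneg _
  set g : ℝ → ℝ := fun t =>
    (t - A) * ((h * (2 * t - A - B)) ^ 2 + (B - t) ^ 4) + (B - t) ^ 5 / 5 with hgdef
  -- Step 1 : pointwise bound on Ioo
  have step1 : ∀ t ∈ Set.Ioo A B, u2 t ^ 2 ≤ 1 / (4 * h ^ 2) * M * g t := by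
    intro t ht
    obtain ⟨htA, htB⟩ := ht
    set K : ℝ → ℝ := fun s =>
      if s < t then (s - A) ^ 2 - h * (2 * t - A - B) else (s - B) ^ 2 with hKdef
    have hKcont : Continuous K := by
      have : K = fun s => if t ≤ s then (s - B) ^ 2
          else (s - A) ^ 2 - h * (2 * t - A - B) := by
        funext s
        rcases lt_or_ge s t with hc | hc
        · simp [hKdef, hc, not_le.2 hc]
        · simp [hKdef, not_lt.2 hc, hc]
      rw [this]
      refine Continuous.if_le (by fun_prop) (by fun_prop) continuous_const continuous_id ?_
      intro s hs
      subst hs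
      rw [hB]; ring
    have hKint : ∀ c d : ℝ, IntervalIntegrable (fun s => K s ^ 2) volume c d :=
      fun c d => ((hKcont.pow 2).intervalIntegrable c d)
    have hKu : IntervalIntegrable (fun s => K s * u'' s) volume A B :=
      hintk.continuousOn_mul hKcont.continuousOn
    -- Cauchy-Schwarz
    have hcs : (∫ s in A..B, K s * u'' s) ^ 2 ≤ (∫ s in A..B, K s ^ 2) * M :=
      cs_interval hAB K u'' hKu (hKint A B) hint2k
    -- bound on ∫ K^2
    have hK2 : (∫ s in A..B, K s ^ 2) ≤ g t := by
      have hsplit : (∫ s in A..B, K s ^ 2)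
          = (∫ s in A..t, K s ^ 2) + ∫ s in t..B, K s ^ 2 :=
        (intervalIntegral.integral_add_adjacent_intervals (hKint A t) (hKint t B)).symm
      have h1 : (∫ s in A..t, K s ^ 2)
          ≤ (t - A) * ((h * (2 * t - A - B)) ^ 2 + (B - t) ^ 4) := by
        have := intervalIntegral.integral_mono_on (μ := volume) htA.le (hKint A t)
          (intervalIntegrable_const) (f := fun s => K s ^ 2)
          (g := fun _ => (h * (2 * t - A - B)) ^ 2 + (B - t) ^ 4) ?_
        · rw [show (t - A) * ((h * (2 * t - A - B)) ^ 2 + (B - t) ^ 4)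
              = (t - A) * (h * (2 * t - A - B)) ^ 2 + (t - A) * (B - t) ^ 4 by ring]
          simpa using this
        · intro s hs
          obtain ⟨hsA, hst⟩ := hs
          show K s ^ 2 ≤ (h * (2 * t - A - B)) ^ 2 + (B - t) ^ 4
          rcases lt_or_ge s t with hc | hc
          · have hK : K s = (s - A) ^ 2 - h * (2 * t - A - B) := by simp [hKdef, hc]
            rw [hK]
            have hx : (s - A) ^ 2 ≤ (t - A) ^ 2 := by nlinarith
            have hid : (t - A) ^ 2 - h * (2 * t - A - B) = (B - t) ^ 2 := by rw [hB]; ring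
            nlinarith [sq_nonneg (h * (2 * t - A - B) - ((t - A) ^ 2 - (s - A) ^ 2)),
              sq_nonneg (s - A), mul_nonneg (sq_nonneg (s - A)) (sub_nonneg.2 hx)]
          · have hst' : s = t := le_antisymm hst hc
            have hK : K s = (s - B) ^ 2 := by simp [hKdef, not_lt.2 hc]
            rw [hK, hst']
            nlinarith [sq_nonneg (h * (2 * t - A - B))]
      have h2 : (∫ s in t..B, K s ^ 2) = (B - t) ^ 5 / 5 := by
        have hcg : (∫ s in t..B, K s ^ 2) = ∫ s in t..B, (s - B) ^ 4 := by
          apply intervalIntegral.integral_congr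
          intro s hs
          rw [Set.uIcc_of_le htB.le] at hs
          have : ¬ s < t := not_lt.2 hs.1
          simp only [hKdef, this, if_false]
          ring
        rw [hcg, show (fun s : ℝ => (s - B) ^ 4) = fun s => (s - B) ^ 4 from rfl]
        rw [intervalIntegral.integral_comp_sub_right (fun x => x ^ 4) B]
        rw [sub_self, integral_pow]
        ring
      rw [hsplit, hgdef]
      simp only
      linarith
    -- combine
    have hu2t := hu t ⟨htA, htB⟩
    rw [hu2t]
    have e1 : (-(1 / (2 * h)) * ∫ s in A..B, K s * u'' s) ^ 2
        = 1 / (4 * h ^ 2) * (∫ s in A..B, K s * u'' s) ^ 2 := by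
      have hne : h ≠ 0 := ne_of_gt hh0
      field_simp
      ring_nf
      try exact Or.inl trivial
    rw [e1]
    have : (∫ s in A..B, K s * u'' s) ^ 2 ≤ g t * M :=
      hcs.trans (mul_le_mul_of_nonneg_right hK2 hM0)
    have h4 : 0 < 1 / (4 * h ^ 2) := by positivity
    calc 1 / (4 * h ^ 2) * (∫ s in A..B, K s * u'' s) ^ 2
        ≤ 1 / (4 * h ^ 2) * (g t * M) := by
          exact mul_le_mul_of_nonneg_left this h4.le
      _ = 1 / (4 * h ^ 2) * M * g t := by ring
  -- Step 2 : integrate the bound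
  have hgcont : Continuous g := by
    rw [hgdef]; fun_prop
  have hgint : IntervalIntegrable (fun t => 1 / (4 * h ^ 2) * M * g t) volume A B :=
    ((continuous_const.mul hgcont).intervalIntegrable A B)
  have hae : (fun t => u2 t ^ 2) ≤ᵐ[volume.restrict (Set.Icc A B)]
      fun t => 1 / (4 * h ^ 2) * M * g t := by
    have h1 : ∀ᵐ t ∂volume.restrict (Set.Icc A B), t ∈ Set.Icc A B :=
      ae_restrict_mem measurableSet_Icc
    have h2 : ∀ᵐ t : ℝ ∂volume, t ∉ ({A, B} : Set ℝ) := by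
      rw [← MeasureTheory.measure_eq_zero_iff_ae_notMem]
      exact Set.Countable.measure_zero ((Set.countable_singleton B).insert A) _
    have h2' : ∀ᵐ t ∂volume.restrict (Set.Icc A B), t ∉ ({A, B} : Set ℝ) :=
      ae_restrict_of_ae h2
    filter_upwards [h1, h2'] with t ht hne
    simp only [Set.mem_insert_iff, Set.mem_singleton_iff, not_or] at hne
    exact step1 t ⟨lt_of_le_of_ne ht.1 (Ne.symm hne.1), lt_of_le_of_ne ht.2 hne.2⟩
  have hstep2 := intervalIntegral.integral_mono_ae_restrict hAB hIk hgint hae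
  have hgval : (∫ t in A..B, g t) = 7 / 30 * h ^ 6 := by
    have hP : ∀ t ∈ Set.uIcc A B, HasDerivAt (fun t : ℝ =>
        4/30*(t-A)^6 - 3/5*h*(t-A)^5 + 2*h^2*(t-A)^4 - 2*h^3*(t-A)^3
          + h^4/2*(t-A)^2 + h^5/5*(t-A)) (g t) t := by
      intro t _
      have h1 : HasDerivAt (fun t : ℝ => t - A) 1 t := (hasDerivAt_id t).sub_const A
      have H := ((((((h1.pow 6).const_mul (4/30 : ℝ)).sub
        ((h1.pow 5).const_mul (3/5*h))).add
        ((h1.pow 4).const_mul (2*h^2))).sub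
        ((h1.pow 3).const_mul (2*h^3))).add
        ((h1.pow 2).const_mul (h^4/2))).add (h1.const_mul (h^5/5))
      refine H.congr_deriv ?_
      rw [hgdef, hB]
      push_cast
      ring
    rw [intervalIntegral.integral_eq_sub_of_hasDerivAt hP
      (hgcont.intervalIntegrable A B), hB]
    ring
  have hconst : (∫ t in A..B, 1 / (4 * h ^ 2) * M * g t)
      = 1 / (4 * h ^ 2) * M * (7 / 30 * h ^ 6) := by
    rw [intervalIntegral.integral_const_mul, hgval]
  have heq : 1 / (4 * h ^ 2) * M * (7 / 30 * h ^ 6) = 7 / 120 * (h ^ 4 * M) := by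
    have hne : h ≠ 0 := ne_of_gt hh0
    field_simp
    ring
  calc ∫ t in A..B, u2 t ^ 2 ≤ ∫ t in A..B, 1 / (4 * h ^ 2) * M * g t := hstep2
    _ = 7 / 120 * (h ^ 4 * M) := by rw [hconst, heq]
    _ ≤ 1 / 9 * h ^ 4 * M := by
        nlinarith [mul_nonneg (pow_nonneg hh0.le 4) hM0]
theorem u2_estimate (T : ℝ) (hT : 0 < T) (n : ℕ) (hn : 1 ≤ n)
    (h : ℝ) (hh : h = T / n)
    (u'' : ℝ → ℝ)
    (hint : IntervalIntegrable u'' volume 0 T)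
    (hint2 : IntervalIntegrable (fun s => (u'' s) ^ 2) volume 0 T)
    (u2 : ℝ → ℝ)
    (hu2 : ∀ i ∈ Finset.Icc 1 n, ∀ t ∈ Set.Ioo (((i : ℝ) - 1) * h) ((i : ℝ) * h),
      u2 t = -(1 / (2 * h)) * ∫ s in (((i : ℝ) - 1) * h)..((i : ℝ) * h),
        (if s < t then (s - ((i : ℝ) - 1) * h) ^ 2 - h * (2 * t - ((i : ℝ) - 1) * h - (i : ℝ) * h)
         else (s - (i : ℝ) * h) ^ 2) * u'' s) :
    Real.sqrt (∫ t in (0 : ℝ)..T, (u2 t) ^ 2) ≤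
      1 / 3 * h ^ 2 * Real.sqrt (∫ s in (0 : ℝ)..T, (u'' s) ^ 2) := by
  have hn0 : (0:ℝ) < (n:ℝ) := by exact_mod_cast Nat.pos_of_ne_zero (by omega)
  have hh0 : 0 < h := by rw [hh]; positivity
  have hT' : (n:ℝ) * h = T := by rw [hh]; field_simp
  have hRHS0 : 0 ≤ ∫ s in (0:ℝ)..T, u'' s ^ 2 :=
    intervalIntegral.integral_nonneg hT.le fun x _ => sq_nonneg _
  have key : (∫ t in (0:ℝ)..T, u2 t ^ 2) ≤ 1 / 9 * h ^ 4 * ∫ s in (0:ℝ)..T, u'' s ^ 2 := by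
    by_cases hI : IntervalIntegrable (fun t => u2 t ^ 2) volume 0 T
    · set ψ : ℕ → ℝ := fun k => k * h with hψ
      have hψ0 : ψ 0 = 0 := by simp [hψ]
      have hψn : ψ n = T := by simp [hψ, hT']
      have hsub : ∀ k, k < n → Set.uIcc (ψ k) (ψ (k+1)) ⊆ Set.uIcc (0:ℝ) T := by
        intro k hk
        have hk1 : ((k:ℝ) + 1) ≤ (n:ℝ) := by exact_mod_cast hk
        have hle : ψ k ≤ ψ (k+1) := by
          simp only [hψ]; push_cast; nlinarith
        rw [Set.uIcc_of_le hle, Set.uIcc_of_le hT.le]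
        apply Set.Icc_subset_Icc
        · simp only [hψ]; positivity
        · simp only [hψ]; push_cast; nlinarith
      have hIk : ∀ k < n, IntervalIntegrable (fun t => u2 t ^ 2) volume (ψ k) (ψ (k+1)) :=
        fun k hk => hI.mono_set (hsub k hk)
      have hint2k : ∀ k < n, IntervalIntegrable (fun s => u'' s ^ 2) volume (ψ k) (ψ (k+1)) :=
        fun k hk => hint2.mono_set (hsub k hk)
      have hs1 := intervalIntegral.sum_integral_adjacent_intervals hIk
      have hs2 := intervalIntegral.sum_integral_adjacent_intervals hint2k
      rw [hψ0, hψn] at hs1 hs2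
      rw [← hs1, ← hs2, Finset.mul_sum]
      apply Finset.sum_le_sum
      intro k hk
      have hk' : k < n := Finset.mem_range.1 hk
      have hB : ψ (k+1) = ψ k + h := by simp only [hψ]; push_cast; ring
      refine elem_est h hh0 (ψ k) (ψ (k+1)) hB u'' u2
        (hint.mono_set (hsub k hk')) (hint2k k hk') (hIk k hk') ?_
      intro t ht
      have hi : (k+1) ∈ Finset.Icc 1 n := Finset.mem_Icc.2 ⟨Nat.le_add_left 1 k, hk'⟩
      have H := hu2 (k+1) hi t
      simp only [Nat.cast_add, Nat.cast_one, add_sub_cancel_right] at H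
      simp only [hψ] at ht ⊢
      push_cast at ht ⊢
      exact H ht
    · rw [intervalIntegral.integral_undef hI]
      exact mul_nonneg (by positivity) hRHS0
  have h2 := Real.sqrt_le_sqrt key
  refine h2.trans ?_
  rw [show 1 / 9 * h ^ 4 * ∫ s in (0:ℝ)..T, u'' s ^ 2
      = (1/3 * h^2)^2 * ∫ s in (0:ℝ)..T, u'' s ^ 2 by ring]
  rw [Real.sqrt_mul (by positivity), Real.sqrt_sq (by positivity)]
end
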